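/- arXiv:2304.11493 — 2 statements merged into one kernel-verified Lean document; each statement's English description precedes it below -/
import Mathlib

section
/- Let R be a commutative Noetherian ring, I a proper ideal of R, M a finitely generated R-module such that Tor_i^R(R/I, M) = 0 for all i > 0, and N an R-module with depth_I(N) > 0 (equivalently, H^0_I(N) = 0). Then there is an injective R-linear map from Ext^1_R(R/I, Hom_R(M, H^1_I(N))) into Ext^1_R(M/IM, H^1_I(N)). (Under these hypotheses Hom_R(M, H^1_I(N)) is isomorphic to the first generalized local cohomology module H^1_I(M,N), so this says Ext^1_R(R/I, H^1_I(M,N)) embeds into Ext^1_R(M/IM, H^1_I(N)).) -/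
open CategoryTheory CategoryTheory.Limits

universe u

noncomputable section

/-- An `R`-module `W` is *weakly Laskerian* if the set of associated primes of `W/U`
is finite for every submodule `U ⊆ W`. -/
def IsWeaklyLaskerian (R : Type u) [CommRing R] (M : Type u)
    [AddCommGroup M] [Module R M] : Prop :=
  ∀ U : Submodule R M, (associatedPrimes R (M ⧸ U)).Finite

/-- `Ext^i_R(A, B)` as an `R`-module, for `A B : ModuleCat R`. -/
def extModule (R : Type u) [CommRing R] (i : ℕ) (A B : ModuleCat.{u} R) : ModuleCat.{u} R :=
  ((Ext R (ModuleCat.{u} R) i).obj (Opposite.op A)).obj B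

/-- An `R`-module `W` is *`I`-weakly cofinite* if `Supp W ⊆ V(I)` and
`Ext^i_R(R/I, W)` is weakly Laskerian for all `i ≥ 0`. -/
def IsWeaklyCofinite (R : Type u) [CommRing R] (I : Ideal R) (M : Type u)
    [AddCommGroup M] [Module R M] : Prop :=
  Module.support R M ⊆ PrimeSpectrum.zeroLocus (I : Set R) ∧
    ∀ i : ℕ, IsWeaklyLaskerian R
      (extModule R i (ModuleCat.of R (R ⧸ I)) (ModuleCat.of R M))


namespace Stmt0Aux

open scoped TensorProduct
open LinearMap Function


variable {R : Type u} [CommRing R]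

/-- c3: degree-1 Tor balancing. -/
theorem balancing {P0 A S0 M : Type u}
    [AddCommGroup P0] [Module R P0] [AddCommGroup A] [Module R A]
    [AddCommGroup S0] [Module R S0] [AddCommGroup M] [Module R M]
    [Module.Flat R P0] [Module.Flat R S0]
    (π0 : P0 →ₗ[R] A) (hπ0 : Surjective π0)
    (σ0 : S0 →ₗ[R] M) (hσ0 : Surjective σ0)
    (hinj : Injective (lTensor A (LinearMap.ker σ0).subtype)) :
    Injective (rTensor M (LinearMap.ker π0).subtype) := by
  set K := LinearMap.ker π0
  set L := LinearMap.ker σ0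
  rw [← LinearMap.ker_eq_bot]
  rw [Submodule.eq_bot_iff]
  intro w hw
  rw [LinearMap.mem_ker] at hw
  -- lift w to K ⊗ S0
  obtain ⟨u, hu⟩ := LinearMap.lTensor_surjective (K : Type u) hσ0 w
  -- (rTensor S0 K.subtype) u lies in ker (lTensor P0 σ0)
  have h1 : lTensor P0 σ0 (rTensor S0 K.subtype u) = 0 := by
    have : lTensor P0 σ0 ∘ₗ rTensor S0 K.subtype
        = rTensor M K.subtype ∘ₗ lTensor (K : Type u) σ0 := by
      rw [LinearMap.lTensor_comp_rTensor, LinearMap.rTensor_comp_lTensor]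
    have := LinearMap.congr_fun this u
    simp only [LinearMap.coe_comp, Function.comp_apply] at this
    rw [this, hu, hw]
  -- hence it is in the range of lTensor P0 L.subtype
  have hexL : Function.Exact (L.subtype) σ0 := by
    rw [LinearMap.exact_iff, Submodule.range_subtype]
  have h2 : rTensor S0 K.subtype u ∈ LinearMap.range (lTensor P0 L.subtype) := by
    have hex := lTensor_exact P0 hexL hσ0
    rw [LinearMap.exact_iff] at hex
    rw [← hex]
    exact h1
  obtain ⟨v, hv⟩ := h2
  -- apply rTensor S0 π0
  have h3 : lTensor A L.subtype (rTensor (L : Type u) π0 v) = 0 := by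
    have hc : lTensor A L.subtype ∘ₗ rTensor (L : Type u) π0
        = rTensor S0 π0 ∘ₗ lTensor P0 L.subtype := by
      rw [LinearMap.lTensor_comp_rTensor, LinearMap.rTensor_comp_lTensor]
    have := LinearMap.congr_fun hc v
    simp only [LinearMap.coe_comp, Function.comp_apply] at this
    rw [this, hv]
    have hc2 : rTensor S0 π0 ∘ₗ rTensor S0 K.subtype = rTensor S0 (π0 ∘ₗ K.subtype) :=
      (LinearMap.rTensor_comp S0 π0 K.subtype).symm
    have hz : π0 ∘ₗ K.subtype = 0 := by
      ext ⟨x, hx⟩; exact hx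
    have := LinearMap.congr_fun hc2 u
    simp only [LinearMap.coe_comp, Function.comp_apply] at this
    rw [this, hz]
    simp
  have h4 : rTensor (L : Type u) π0 v = 0 := by
    have := hinj (a₁ := rTensor (L : Type u) π0 v) (a₂ := 0) (by simpa using h3)
    simpa using this
  -- v in range of rTensor L K.subtype
  have hexK : Function.Exact (K.subtype) π0 := by
    rw [LinearMap.exact_iff, Submodule.range_subtype]
  have h5 : v ∈ LinearMap.range (rTensor (L : Type u) K.subtype) := by
    have hex := rTensor_exact (M := K) (L : Type u) hexK hπ0
    rw [LinearMap.exact_iff] at hex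
    rw [← hex]
    exact h4
  obtain ⟨t, ht⟩ := h5
  -- conclude u = lTensor K L.subtype t
  have h6 : rTensor S0 K.subtype (lTensor (K : Type u) L.subtype t) = rTensor S0 K.subtype u := by
    have hc : rTensor S0 K.subtype ∘ₗ lTensor (K : Type u) L.subtype
        = lTensor P0 L.subtype ∘ₗ rTensor (L : Type u) K.subtype := by
      rw [LinearMap.rTensor_comp_lTensor, LinearMap.lTensor_comp_rTensor]
    have := LinearMap.congr_fun hc t
    simp only [LinearMap.coe_comp, Function.comp_apply] at this
    rw [this, ht, hv]
  have hKinj : Injective (rTensor S0 K.subtype) :=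
    Module.Flat.rTensor_preserves_injective_linearMap _ K.injective_subtype
  have h7 : u = lTensor (K : Type u) L.subtype t := (hKinj h6).symm
  -- w = 0
  have h8 : lTensor (K : Type u) σ0 ∘ₗ lTensor (K : Type u) L.subtype
      = lTensor (K : Type u) (σ0 ∘ₗ L.subtype) := (LinearMap.lTensor_comp _ _ _).symm
  have hz2 : σ0 ∘ₗ L.subtype = 0 := by ext ⟨x, hx⟩; exact hx
  rw [← hu, h7]
  have := LinearMap.congr_fun h8 t
  simp only [LinearMap.coe_comp, Function.comp_apply] at this
  rw [this, hz2]
  simp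

/-- c2: from exactness of the tensored complex in degree 1 to injectivity on the syzygy. -/
theorem step_c2 {S0 S1 S2 M A : Type u}
    [AddCommGroup S0] [Module R S0] [AddCommGroup S1] [Module R S1]
    [AddCommGroup S2] [Module R S2] [AddCommGroup M] [Module R M]
    [AddCommGroup A] [Module R A]
    (e1 : S1 →ₗ[R] S0) (e2 : S2 →ₗ[R] S1) (σ0 : S0 →ₗ[R] M)
    (h10 : LinearMap.range e1 = LinearMap.ker σ0)
    (h21 : LinearMap.range e2 = LinearMap.ker e1)
    (h : LinearMap.ker (lTensor A e1) ≤ LinearMap.range (lTensor A e2)) :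
    Injective (lTensor A (LinearMap.ker σ0).subtype) := by
  set L := LinearMap.ker σ0
  -- corestriction of e1 to L
  have hmem : ∀ x, e1 x ∈ L := fun x => h10 ▸ LinearMap.mem_range_self e1 x
  set l : S1 →ₗ[R] L := e1.codRestrict L hmem with hl
  have hlsurj : Surjective l := by
    rintro ⟨y, hy⟩
    rw [← h10] at hy
    obtain ⟨x, hx⟩ := hy
    exact ⟨x, Subtype.ext hx⟩
  have hcomp : L.subtype ∘ₗ l = e1 := by ext x; rfl
  rw [← LinearMap.ker_eq_bot, Submodule.eq_bot_iff]
  intro x hx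
  rw [LinearMap.mem_ker] at hx
  obtain ⟨y, hy⟩ := LinearMap.lTensor_surjective A hlsurj x
  have h1 : lTensor A e1 y = 0 := by
    have : lTensor A L.subtype ∘ₗ lTensor A l = lTensor A e1 := by
      rw [← LinearMap.lTensor_comp, hcomp]
    have := LinearMap.congr_fun this y
    simp only [LinearMap.coe_comp, Function.comp_apply] at this
    rw [← this, hy, hx]
  obtain ⟨z, hz⟩ := h (by rw [LinearMap.mem_ker]; exact h1)
  have hle2 : l ∘ₗ e2 = 0 := by
    ext w
    have h0 : e1 (e2 w) = 0 := by
      have : e2 w ∈ LinearMap.ker e1 := h21 ▸ LinearMap.mem_range_self e2 w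
      exact this
    show ((l (e2 w) : L) : S0) = ((0 : L) : S0)
    exact h0
  have : lTensor A l ∘ₗ lTensor A e2 = 0 := by
    rw [← LinearMap.lTensor_comp, hle2]
    exact lTensor_zero A
  have hxz : x = 0 := by
    have hc := LinearMap.congr_fun this z
    simp only [LinearMap.coe_comp, Function.comp_apply, LinearMap.zero_apply] at hc
    rw [← hy, ← hz, hc]
  exact hxz

/-- c1: exactness of `P ⊗ M` in degree 1 from injectivity on the syzygy. -/
theorem step_c1 {P0 P1 P2 A M : Type u}
    [AddCommGroup P0] [Module R P0] [AddCommGroup P1] [Module R P1]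
    [AddCommGroup P2] [Module R P2] [AddCommGroup A] [Module R A]
    [AddCommGroup M] [Module R M]
    (d1 : P1 →ₗ[R] P0) (d2 : P2 →ₗ[R] P1) (π0 : P0 →ₗ[R] A)
    (h10 : LinearMap.range d1 = LinearMap.ker π0)
    (h21 : LinearMap.range d2 = LinearMap.ker d1)
    (hinj : Injective (rTensor M (LinearMap.ker π0).subtype)) :
    LinearMap.ker (rTensor M d1) ≤ LinearMap.range (rTensor M d2) := by
  set K := LinearMap.ker π0
  have hmem : ∀ x, d1 x ∈ K := fun x => h10 ▸ LinearMap.mem_range_self d1 x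
  set k : P1 →ₗ[R] K := d1.codRestrict K hmem with hk
  have hksurj : Surjective k := by
    rintro ⟨y, hy⟩
    rw [← h10] at hy
    obtain ⟨x, hx⟩ := hy
    exact ⟨x, Subtype.ext hx⟩
  have hcomp : K.subtype ∘ₗ k = d1 := by ext x; rfl
  intro x hx
  rw [LinearMap.mem_ker] at hx
  have h1 : rTensor M k x = 0 := by
    apply hinj (a₂ := 0)
    have : rTensor M K.subtype ∘ₗ rTensor M k = rTensor M d1 := by
      rw [← LinearMap.rTensor_comp, hcomp]
    have := LinearMap.congr_fun this x
    simp only [LinearMap.coe_comp, Function.comp_apply] at this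
    rw [this, hx]
    simp
  have hkerk : LinearMap.ker k = LinearMap.ker d1 := by
    ext w
    simp only [LinearMap.mem_ker]
    constructor
    · intro hw
      have : ((k w : K) : P0) = ((0 : K) : P0) := congrArg _ hw
      exact this
    · intro hw
      exact Subtype.ext hw
  have hexk : Function.Exact d2 k := by
    rw [LinearMap.exact_iff, hkerk]
    exact h21.symm
  have hex := rTensor_exact M hexk hksurj
  rw [LinearMap.exact_iff] at hex
  have hmem2 : x ∈ LinearMap.ker (rTensor M k) := h1
  rw [hex] at hmem2
  exact hmem2

/-- Extension lemma: injectivity of the comparison map Φ. -/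
theorem extend_of_factor {F X P0' P1' Y : Type u}
    [AddCommGroup F] [Module R F] [AddCommGroup X] [Module R X]
    [AddCommGroup P0'] [Module R P0'] [AddCommGroup P1'] [Module R P1']
    [AddCommGroup Y] [Module R Y]
    (p : F →ₗ[R] X) (π' : P0' →ₗ[R] X) (hπ' : Surjective π') (d1' : P1' →ₗ[R] P0')
    (hexact : LinearMap.range d1' = LinearMap.ker π')
    (f0 : P0' →ₗ[R] F) (hf0 : p ∘ₗ f0 = π')
    (φ : (LinearMap.ker p : Submodule R F) →ₗ[R] Y) (β : P0' →ₗ[R] Y)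
    (hfac : ∀ w : P1', φ ⟨f0 (d1' w), by
        rw [LinearMap.mem_ker]
        have := LinearMap.congr_fun hf0 (d1' w)
        simp only [LinearMap.coe_comp, Function.comp_apply] at this
        rw [this]
        have : d1' w ∈ LinearMap.ker π' := hexact ▸ LinearMap.mem_range_self d1' w
        exact this⟩ = β (d1' w)) :
    ∃ χ : F →ₗ[R] Y, χ ∘ₗ (LinearMap.ker p).subtype = φ := by
  have hpf : ∀ (x : F) (q : P0'), π' q = p x → x - f0 q ∈ LinearMap.ker p := by
    intro x q hq
    rw [LinearMap.mem_ker, map_sub]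
    have := LinearMap.congr_fun hf0 q
    simp only [LinearMap.coe_comp, Function.comp_apply] at this
    rw [this, hq, sub_self]
  -- independence of the choice of q
  have key : ∀ (x : F) (q q' : P0') (hq : π' q = p x) (hq' : π' q' = p x),
      φ ⟨x - f0 q, hpf x q hq⟩ + β q = φ ⟨x - f0 q', hpf x q' hq'⟩ + β q' := by
    intro x q q' hq hq'
    have hqq : q - q' ∈ LinearMap.ker π' := by
      rw [LinearMap.mem_ker, map_sub, hq, hq', sub_self]
    rw [← hexact] at hqq
    obtain ⟨w, hw⟩ := hqq
    have hsub : (⟨x - f0 q, hpf x q hq⟩ : LinearMap.ker p)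
        = ⟨x - f0 q', hpf x q' hq'⟩ - ⟨f0 (d1' w), by
            rw [LinearMap.mem_ker]
            have := LinearMap.congr_fun hf0 (d1' w)
            simp only [LinearMap.coe_comp, Function.comp_apply] at this
            rw [this]
            have : d1' w ∈ LinearMap.ker π' := hexact ▸ LinearMap.mem_range_self d1' w
            exact this⟩ := by
      apply Subtype.ext
      show x - f0 q = (x - f0 q') - f0 (d1' w)
      rw [hw, map_sub]
      abel
    rw [hsub, map_sub, hfac w, hw, map_sub]
    abel
  set s : X → P0' := Function.surjInv hπ' with hs
  have hsval : ∀ b, π' (s b) = b := fun b => Function.surjInv_eq hπ' b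
  set χfun : F → Y := fun x => φ ⟨x - f0 (s (p x)), hpf x (s (p x)) (hsval (p x))⟩ + β (s (p x))
    with hχ
  have hχadd : ∀ x y, χfun (x + y) = χfun x + χfun y := by
    intro x y
    have h1 : π' (s (p x) + s (p y)) = p (x + y) := by
      rw [map_add, hsval, hsval, map_add]
    have := key (x + y) (s (p (x + y))) (s (p x) + s (p y)) (hsval _) h1
    rw [hχ]
    simp only []
    rw [this]
    have hsub : (⟨x + y - f0 (s (p x) + s (p y)), hpf (x+y) _ h1⟩ : LinearMap.ker p)
        = ⟨x - f0 (s (p x)), hpf x _ (hsval _)⟩ + ⟨y - f0 (s (p y)), hpf y _ (hsval _)⟩ := by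
      apply Subtype.ext
      show x + y - f0 (s (p x) + s (p y)) = (x - f0 (s (p x))) + (y - f0 (s (p y)))
      rw [map_add]
      abel
    rw [hsub, map_add, map_add]
    abel
  have hχsmul : ∀ (r : R) (x : F), χfun (r • x) = r • χfun x := by
    intro r x
    have h1 : π' (r • s (p x)) = p (r • x) := by
      rw [map_smul, hsval, map_smul]
    have := key (r • x) (s (p (r • x))) (r • s (p x)) (hsval _) h1
    rw [hχ]
    simp only []
    rw [this]
    have hsub : (⟨r • x - f0 (r • s (p x)), hpf (r • x) _ h1⟩ : LinearMap.ker p)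
        = r • ⟨x - f0 (s (p x)), hpf x _ (hsval _)⟩ := by
      apply Subtype.ext
      show r • x - f0 (r • s (p x)) = r • (x - f0 (s (p x)))
      rw [map_smul, smul_sub]
    rw [hsub, map_smul, map_smul, smul_add]
  refine ⟨{ toFun := χfun, map_add' := hχadd, map_smul' := hχsmul }, ?_⟩
  ext ⟨x, hx⟩
  simp only [LinearMap.coe_comp, Function.comp_apply, Submodule.coe_subtype, LinearMap.coe_mk,
    AddHom.coe_mk]
  show χfun x = φ ⟨x, hx⟩
  have hpx : p x = 0 := hx
  have h0 : π' (0 : P0') = p x := by rw [map_zero, hpx]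
  have := key x (s (p x)) 0 (hsval _) h0
  rw [hχ]
  simp only []
  rw [this]
  have h2 : (⟨x - f0 0, hpf x 0 h0⟩ : LinearMap.ker p) = ⟨x, hx⟩ :=
    Subtype.ext (by show x - f0 0 = x; rw [map_zero, sub_zero])
  rw [h2, map_zero, add_zero]


variable {R : Type u} [CommRing R]


theorem ext_inject (X Y F : ModuleCat.{u} R) (p : F ⟶ X) (hp : Function.Surjective p) :
    ∃ Φ : ((LinearMap.ker (p.hom : F →ₗ[R] X) →ₗ[R] Y) ⧸
        LinearMap.range (((LinearMap.ker (p.hom : F →ₗ[R] X)).subtype).lcomp R Y)) →ₗ[R]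
        extModule R 1 X Y,
      Function.Injective Φ := by
  obtain ⟨P⟩ := (HasProjectiveResolution.out (Z := X))
  -- concrete Ext^1
  let Cx := P.complex.linearYonedaObj R Y
  let T : ShortComplex (ModuleCat.{u} R) := Cx.sc' 0 1 2
  have hT1 : Cx.sc 1 ≅ T := Cx.isoSc' 0 1 2 (by simp) (by simp)
  let E0 : (extModule R 1 X Y : Type u) ≃ₗ[R]
      (↥(LinearMap.ker T.g.hom) ⧸ LinearMap.range T.moduleCatToCycles) :=
    ((P.isoExt 1 Y) ≪≫ ShortComplex.homologyMapIso hT1 ≪≫ T.moduleCatHomologyIso).toLinearEquiv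
  -- data
  let π' : P.complex.X 0 →ₗ[R] X := (P.π.f 0).hom
  have hπ' : Function.Surjective π' := (ModuleCat.epi_iff_surjective (P.π.f 0)).mp inferInstance
  have hex0 : LinearMap.range (P.complex.d 1 0).hom = LinearMap.ker π' :=
    P.exact₀.moduleCat_range_eq_ker
  haveI : Module.Projective R (P.complex.X 0) := ModuleCat.projective_of_module_projective (P.complex.X 0)
  obtain ⟨f0, hf0⟩ := Module.projective_lifting_property (p.hom : F →ₗ[R] X) π' hp
  have hmemρ : ∀ w : P.complex.X 1, f0 (P.complex.d 1 0 w) ∈ LinearMap.ker (p.hom : F →ₗ[R] X) := by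
    intro w
    rw [LinearMap.mem_ker]
    have h1 := LinearMap.congr_fun hf0 (P.complex.d 1 0 w)
    simp only [LinearMap.coe_comp, Function.comp_apply] at h1
    rw [h1]
    have h2 : P.complex.d 1 0 w ∈ LinearMap.ker π' := hex0 ▸ LinearMap.mem_range_self _ w
    exact h2
  let ρ : P.complex.X 1 →ₗ[R] (LinearMap.ker (p.hom : F →ₗ[R] X)) :=
    (f0 ∘ₗ ((P.complex.d 1 0).hom : P.complex.X 1 →ₗ[R] P.complex.X 0)).codRestrict _ hmemρ
  -- the map into cocycles
  have hcoc : ∀ φ : (LinearMap.ker (p.hom : F →ₗ[R] X)) →ₗ[R] Y,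
      (show (T.X₂ : Type u) from (ModuleCat.ofHom ((ρ.lcomp R Y) φ) : P.complex.X 1 ⟶ Y)) ∈
        LinearMap.ker T.g.hom := by
    intro φ
    rw [LinearMap.mem_ker]
    show (P.complex.d 2 1 ≫ ModuleCat.ofHom (φ ∘ₗ ρ) : P.complex.X 2 ⟶ Y) = 0
    apply ModuleCat.hom_ext
    apply LinearMap.ext
    intro z
    show φ (ρ (P.complex.d 2 1 z)) = 0
    have : ρ (P.complex.d 2 1 z) = 0 := by
      apply Subtype.ext
      show f0 (P.complex.d 1 0 (P.complex.d 2 1 z)) = 0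
      have hd : P.complex.d 1 0 (P.complex.d 2 1 z) = 0 := by
        have h2 := LinearMap.congr_fun
          (congrArg ModuleCat.Hom.hom (P.complex.d_comp_d 2 1 0)) z
        exact h2
      rw [hd, map_zero]
    rw [this, map_zero]
  let Φ₁ : ((LinearMap.ker (p.hom : F →ₗ[R] X)) →ₗ[R] Y) →ₗ[R] ↥(LinearMap.ker T.g.hom) :=
    (ModuleCat.homLinearEquiv.symm.toLinearMap ∘ₗ ρ.lcomp R Y).codRestrict _ hcoc
  let Φ₀ := (LinearMap.range T.moduleCatToCycles).mkQ ∘ₗ Φ₁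
  have hle : LinearMap.range (((LinearMap.ker (p.hom : F →ₗ[R] X)).subtype).lcomp R Y) ≤
      LinearMap.ker Φ₀ := by
    rintro _ ⟨χ, rfl⟩
    rw [LinearMap.mem_ker]
    show (LinearMap.range T.moduleCatToCycles).mkQ (Φ₁ (χ ∘ₗ (LinearMap.ker _).subtype)) = 0
    rw [← LinearMap.mem_ker, Submodule.ker_mkQ]
    refine ⟨(ModuleCat.ofHom (χ ∘ₗ f0) : P.complex.X 0 ⟶ Y), ?_⟩
    apply Subtype.ext
    show (T.f (ModuleCat.ofHom (χ ∘ₗ f0))) = ModuleCat.ofHom ((χ ∘ₗ (LinearMap.ker _).subtype) ∘ₗ ρ)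
    apply ModuleCat.hom_ext
    apply LinearMap.ext
    intro w
    rfl
  let Φq := Submodule.liftQ _ Φ₀ hle
  have hinjΦ : Function.Injective Φq := by
    rw [← LinearMap.ker_eq_bot, Submodule.eq_bot_iff]
    intro a ha
    obtain ⟨φ, rfl⟩ := Submodule.Quotient.mk_surjective _ a
    rw [LinearMap.mem_ker, Submodule.liftQ_apply] at ha
    have ha2 : Φ₁ φ ∈ LinearMap.range T.moduleCatToCycles := by
      have h' : (LinearMap.range T.moduleCatToCycles).mkQ (Φ₁ φ) = 0 := ha
      rwa [← LinearMap.mem_ker, Submodule.ker_mkQ] at h'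
    obtain ⟨ψ, hψ⟩ := ha2
    let β : P.complex.X 0 →ₗ[R] Y := ψ.hom
    have hψ2 : ((P.complex.d 1 0 ≫ ψ).hom : P.complex.X 1 →ₗ[R] Y) = φ ∘ₗ ρ :=
      congrArg (fun x => ModuleCat.Hom.hom (Subtype.val x)) hψ
    have hfac : ∀ w : P.complex.X 1, φ ⟨f0 (P.complex.d 1 0 w), hmemρ w⟩
        = β (P.complex.d 1 0 w) := by
      intro w
      exact (LinearMap.congr_fun hψ2 w).symm
    obtain ⟨χ, hχ⟩ := extend_of_factor (p.hom : F →ₗ[R] X) π' hπ' (P.complex.d 1 0).hom hex0 f0 hf0 φ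
      β (fun w => hfac w)
    rw [Submodule.Quotient.mk_eq_zero]
    exact ⟨χ, hχ⟩
  exact ⟨E0.symm.toLinearMap ∘ₗ Φq, (E0.symm.injective).comp hinjΦ⟩


set_option maxHeartbeats 2000000 in
theorem ext_dom (A Hc : ModuleCat.{u} R) (M : Type u) [AddCommGroup M] [Module R M]
    (P : ProjectiveResolution A)
    (hex1 : LinearMap.ker (rTensor M ((P.complex.d 1 0).hom : P.complex.X 1 →ₗ[R] P.complex.X 0)) ≤
      LinearMap.range (rTensor M ((P.complex.d 2 1).hom : P.complex.X 2 →ₗ[R] P.complex.X 1)))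
    (X : ModuleCat.{u} R)
    (p : ModuleCat.of R ((P.complex.X 0 : Type u) ⊗[R] M) ⟶ X)
    (hker : LinearMap.ker (p.hom : ((P.complex.X 0 : Type u) ⊗[R] M) →ₗ[R] X)
      = LinearMap.range (rTensor M ((P.complex.d 1 0).hom : P.complex.X 1 →ₗ[R] P.complex.X 0))) :
    ∃ E : (extModule R 1 A (ModuleCat.of R (M →ₗ[R] Hc)) : Type u) →ₗ[R]
        ((LinearMap.ker (p.hom : ((P.complex.X 0 : Type u) ⊗[R] M) →ₗ[R] X) →ₗ[R] Hc) ⧸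
          LinearMap.range
            (((LinearMap.ker (p.hom : ((P.complex.X 0 : Type u) ⊗[R] M) →ₗ[R] X)).subtype).lcomp
              R Hc)),
      Function.Bijective E := by
  classical
  set Y : ModuleCat.{u} R := ModuleCat.of R (M →ₗ[R] Hc) with hY
  let Cx := P.complex.linearYonedaObj R Y
  let T : ShortComplex (ModuleCat.{u} R) := Cx.sc' 0 1 2
  have hT1 : Cx.sc 1 ≅ T := Cx.isoSc' 0 1 2 (by simp) (by simp)
  let E0 : (extModule R 1 A Y : Type u) ≃ₗ[R]
      (↥(LinearMap.ker T.g.hom) ⧸ LinearMap.range T.moduleCatToCycles) :=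
    ((P.isoExt 1 Y) ≪≫ ShortComplex.homologyMapIso hT1 ≪≫ T.moduleCatHomologyIso).toLinearEquiv
  set d1 : (P.complex.X 1 : Type u) →ₗ[R] P.complex.X 0 := (P.complex.d 1 0 : _ ⟶ _).hom with hd1
  set d2 : (P.complex.X 2 : Type u) →ₗ[R] P.complex.X 1 := (P.complex.d 2 1 : _ ⟶ _).hom with hd2
  set K := LinearMap.ker (p.hom : ((P.complex.X 0 : Type u) ⊗[R] M) →ₗ[R] X) with hK
  have hmemρ : ∀ v : (P.complex.X 1 : Type u) ⊗[R] M, rTensor M d1 v ∈ K := by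
    intro v
    show rTensor M d1 v ∈ K
    rw [hker]
    exact LinearMap.mem_range_self _ v
  set ρ : ((P.complex.X 1 : Type u) ⊗[R] M) →ₗ[R] K := (rTensor M d1).codRestrict K hmemρ
    with hρ
  have hρval : ∀ v, (ρ v).1 = rTensor M d1 v := fun _ => rfl
  have hρsurj : Function.Surjective ρ := by
    rintro ⟨k, hk⟩
    rw [hker] at hk
    obtain ⟨v, hv⟩ := hk
    exact ⟨v, Subtype.ext hv⟩
  have hd1d2 : ∀ z, d1 (d2 z) = 0 := by
    intro z
    have h2 := LinearMap.congr_fun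
      (congrArg ModuleCat.Hom.hom (P.complex.d_comp_d 2 1 0)) z
    exact h2
  -- the map θ0 into 1-cochains
  set θ0 : (K →ₗ[R] Hc) →ₗ[R] ((P.complex.X 1 : Type u) →ₗ[R] (M →ₗ[R] Hc)) :=
    (TensorProduct.lcurry (RingHom.id R) (P.complex.X 1 : Type u) M Hc) ∘ₗ (ρ.lcomp R Hc) with hθ0
  have hθ0val : ∀ (φ : K →ₗ[R] Hc) (x : (P.complex.X 1 : Type u)) (m : M),
      (θ0 φ) x m = φ (ρ (x ⊗ₜ m)) := fun _ _ _ => rfl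
  have hcoc : ∀ φ : K →ₗ[R] Hc, (show (T.X₂ : Type u) from (ModuleCat.ofHom (θ0 φ) :
      P.complex.X 1 ⟶ Y)) ∈ LinearMap.ker T.g.hom := by
    intro φ
    rw [LinearMap.mem_ker]
    show (P.complex.d 2 1 ≫ (ModuleCat.ofHom (θ0 φ) :
      P.complex.X 1 ⟶ Y) : P.complex.X 2 ⟶ Y) = 0
    apply ModuleCat.hom_ext
    apply LinearMap.ext
    intro z
    apply LinearMap.ext
    intro m
    show (θ0 φ) (d2 z) m = 0
    rw [hθ0val]
    have : ρ ((d2 z) ⊗ₜ m) = 0 := by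
      apply Subtype.ext
      rw [hρval]
      rw [rTensor_tmul, hd1d2]
      exact TensorProduct.zero_tmul _ _
    rw [this, map_zero]
  set θ : (K →ₗ[R] Hc) →ₗ[R] ↥(LinearMap.ker T.g.hom) := (ModuleCat.homLinearEquiv.symm.toLinearMap ∘ₗ θ0).codRestrict _ hcoc with hθ
  -- injectivity of θ
  have hθinj : Function.Injective θ := by
    rw [← LinearMap.ker_eq_bot, Submodule.eq_bot_iff]
    intro φ hφ
    rw [LinearMap.mem_ker] at hφ
    have hval : θ0 φ = 0 := congrArg (fun x => ModuleCat.Hom.hom (Subtype.val x)) hφ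
    apply LinearMap.ext
    rintro k
    obtain ⟨v, rfl⟩ := hρsurj k
    have : (φ ∘ₗ ρ : ((P.complex.X 1 : Type u) ⊗[R] M) →ₗ[R] Hc) = 0 := by
      apply TensorProduct.ext'
      intro x m
      have := LinearMap.congr_fun (LinearMap.congr_fun hval x) m
      exact this
    exact LinearMap.congr_fun this v
  -- surjectivity of θ
  have hθsurj : Function.Surjective θ := by
    rintro ⟨ψc, hψc⟩
    rw [LinearMap.mem_ker] at hψc
    let ψcm : (P.complex.X 1 : Type u) →ₗ[R] (M →ₗ[R] Hc) := ψc.hom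
    set ψ : ((P.complex.X 1 : Type u) ⊗[R] M) →ₗ[R] Hc :=
      TensorProduct.lift ψcm with hψ
    have hψd2 : ∀ v, ψ (rTensor M d2 v) = 0 := by
      intro v
      have hcomp : (ψ ∘ₗ rTensor M d2 : ((P.complex.X 2 : Type u) ⊗[R] M) →ₗ[R] Hc) = 0 := by
        apply TensorProduct.ext'
        intro z m
        show ψ ((d2 z) ⊗ₜ m) = 0
        rw [hψ, TensorProduct.lift.tmul]
        have : ψcm (d2 z) = (0 : M →ₗ[R] Hc) := by
          have h3 : ((P.complex.d 2 1 ≫ ψc) : P.complex.X 2 ⟶ Y)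
              = 0 := hψc
          exact LinearMap.congr_fun (congrArg ModuleCat.Hom.hom h3) z
        rw [this]
        rfl
      exact LinearMap.congr_fun hcomp v
    have hleψ : LinearMap.ker ρ ≤ LinearMap.ker ψ := by
      intro v hv
      rw [LinearMap.mem_ker] at hv ⊢
      have hv2 : rTensor M d1 v = 0 := by
        have h4 := congrArg Subtype.val hv
        rw [hρval] at h4
        exact h4
      obtain ⟨w, hw⟩ := hex1 hv2
      rw [← hw]
      exact hψd2 w
    set lρ := Submodule.liftQ (LinearMap.ker ρ) ρ le_rfl with hlρ
    have hlρinj : Function.Injective lρ := by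
      rw [← LinearMap.ker_eq_bot, Submodule.eq_bot_iff]
      intro a ha
      obtain ⟨v, rfl⟩ := Submodule.Quotient.mk_surjective _ a
      rw [LinearMap.mem_ker, Submodule.liftQ_apply] at ha
      rw [Submodule.Quotient.mk_eq_zero]
      exact ha
    have hlρsurj : Function.Surjective lρ := by
      intro k
      obtain ⟨v, hv⟩ := hρsurj k
      exact ⟨Submodule.Quotient.mk v, by rw [Submodule.liftQ_apply, hv]⟩
    set eρ := LinearEquiv.ofBijective lρ ⟨hlρinj, hlρsurj⟩ with heρ
    set φ : K →ₗ[R] Hc := (Submodule.liftQ (LinearMap.ker ρ) ψ hleψ) ∘ₗ eρ.symm.toLinearMap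
      with hφdef
    have hφρ : ∀ v, φ (ρ v) = ψ v := by
      intro v
      have h1 : eρ.symm (ρ v) = Submodule.Quotient.mk v := by
        rw [LinearEquiv.symm_apply_eq]
        show lρ (Submodule.Quotient.mk v) = ρ v
        rw [Submodule.liftQ_apply]
      show (Submodule.liftQ (LinearMap.ker ρ) ψ hleψ) (eρ.symm (ρ v)) = ψ v
      rw [h1, Submodule.liftQ_apply]
    refine ⟨φ, ?_⟩
    apply Subtype.ext
    show ModuleCat.ofHom (θ0 φ) = ψc
    apply ModuleCat.hom_ext
    apply LinearMap.ext
    intro x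
    apply LinearMap.ext
    intro m
    show (θ0 φ) x m = ψcm x m
    rw [hθ0val, hφρ]
    show ψ (x ⊗ₜ m) = _
    rw [hψ, TensorProduct.lift.tmul]
  set θe := LinearEquiv.ofBijective θ ⟨hθinj, hθsurj⟩ with hθe
  -- identification of the coboundary submodules
  have hmap : Submodule.map (θe : (K →ₗ[R] Hc) →ₗ[R] ↥(LinearMap.ker T.g.hom))
      (LinearMap.range ((K.subtype).lcomp R Hc)) = LinearMap.range T.moduleCatToCycles := by
    ext y
    simp only [Submodule.mem_map, LinearMap.mem_range]
    constructor
    · rintro ⟨_, ⟨χ, rfl⟩, rfl⟩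
      refine ⟨(ModuleCat.ofHom ((TensorProduct.lcurry (RingHom.id R) (P.complex.X 0 : Type u) M Hc) χ) :
        P.complex.X 0 ⟶ Y), ?_⟩
      apply Subtype.ext
      show (P.complex.d 1 0 ≫ (ModuleCat.ofHom ((TensorProduct.lcurry (RingHom.id R) (P.complex.X 0 : Type u) M Hc) χ) :
        P.complex.X 0 ⟶ Y) : P.complex.X 1 ⟶ Y) = ModuleCat.ofHom (θ0 (χ ∘ₗ K.subtype))
      apply ModuleCat.hom_ext
      apply LinearMap.ext
      intro x
      apply LinearMap.ext
      intro m
      show χ ((d1 x) ⊗ₜ m) = (θ0 (χ ∘ₗ K.subtype)) x m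
      rw [hθ0val]
      show χ ((d1 x) ⊗ₜ m) = χ (ρ (x ⊗ₜ m)).1
      rw [hρval, rTensor_tmul]
    · rintro ⟨ψ0, rfl⟩
      let ψ0m : (P.complex.X 0 : Type u) →ₗ[R] (M →ₗ[R] Hc) := ψ0.hom
      refine ⟨(TensorProduct.lift ψ0m) ∘ₗ K.subtype,
        ⟨TensorProduct.lift ψ0m, rfl⟩, ?_⟩
      apply Subtype.ext
      show ModuleCat.ofHom (θ0 _) = (P.complex.d 1 0 ≫ ψ0 : P.complex.X 1 ⟶ Y)
      apply ModuleCat.hom_ext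
      apply LinearMap.ext
      intro x
      apply LinearMap.ext
      intro m
      show (θ0 ((TensorProduct.lift ψ0m) ∘ₗ K.subtype)) x m = ψ0m (d1 x) m
      rw [hθ0val]
      show TensorProduct.lift ψ0m (ρ (x ⊗ₜ m)).1 = ψ0m (d1 x) m
      rw [hρval, rTensor_tmul, TensorProduct.lift.tmul]
  have hmap2 : (LinearMap.range T.moduleCatToCycles).map
      (θe.symm : ↥(LinearMap.ker T.g.hom) →ₗ[R] (K →ₗ[R] Hc))
      = LinearMap.range ((K.subtype).lcomp R Hc) := by
    ext x
    simp only [Submodule.mem_map]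
    constructor
    · rintro ⟨y, hy, rfl⟩
      rw [← hmap] at hy
      obtain ⟨z, hz, hzy⟩ := hy
      have h6 : (θe.symm : ↥(LinearMap.ker T.g.hom) →ₗ[R] _) y = z := by
        show θe.symm y = z
        rw [← hzy]; exact θe.symm_apply_apply z
      rw [h6]
      exact hz
    · intro hx
      refine ⟨θe x, ?_, θe.symm_apply_apply x⟩
      rw [← hmap]
      exact Submodule.mem_map_of_mem hx
  let Eq2 := Submodule.Quotient.equiv (LinearMap.range T.moduleCatToCycles)
    (LinearMap.range ((K.subtype).lcomp R Hc)) θe.symm hmap2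
  exact ⟨(E0.trans Eq2).toLinearMap, (E0.trans Eq2).bijective⟩


end Stmt0Aux

open scoped TensorProduct in
set_option maxHeartbeats 2000000 in
/-- Let `R` be a commutative Noetherian ring, `I` a proper ideal, `M` a
finitely generated `R`-module with `Tor_i^R(R/I, M) = 0` for all `i > 0`, and `N` an
`R`-module with `depth_I N > 0`, i.e. `H^0_I(N) = 0`. Then `Ext^1_R(R/I, Hom_R(M, H^1_I(N)))`
embeds into `Ext^1_R(M/IM, H^1_I(N))`. -/
theorem ext_one_hom_localCohomology_injective_into_ext_one_quotient
    (R : Type u) [CommRing R] [IsNoetherianRing R] (I : Ideal R) (hI : I ≠ ⊤)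
    (M : Type u) [AddCommGroup M] [Module R M] [Module.Finite R M]
    (hTor : ∀ i : ℕ, 0 < i →
      IsZero (((Tor (ModuleCat.{u} R) i).obj (ModuleCat.of R (R ⧸ I))).obj (ModuleCat.of R M)))
    (N : ModuleCat.{u} R)
    (hdepth : IsZero ((localCohomology I 0).obj N)) :
    ∃ f : extModule R 1 (ModuleCat.of R (R ⧸ I))
            (ModuleCat.of R (M →ₗ[R] ((localCohomology I 1).obj N))) →ₗ[R]
          extModule R 1 (ModuleCat.of R (M ⧸ (I • (⊤ : Submodule R M))))
            ((localCohomology I 1).obj N),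
      Function.Injective f := by
  classical
  obtain ⟨P⟩ := (HasProjectiveResolution.out (Z := ModuleCat.of R (R ⧸ I)))
  obtain ⟨S⟩ := (HasProjectiveResolution.out (Z := ModuleCat.of R M))
  set A : ModuleCat.{u} R := ModuleCat.of R (R ⧸ I) with hA
  set Hc : ModuleCat.{u} R := (localCohomology I 1).obj N with hHc
  set Xq : ModuleCat.{u} R := ModuleCat.of R (M ⧸ (I • (⊤ : Submodule R M))) with hXq
  -- Step 1: Tor_1 vanishing gives exactness of (R/I) ⊗ S in degree 1
  have htor := hTor 1 one_pos
  set Ft := (MonoidalCategory.tensoringLeft (ModuleCat.{u} R)).obj A with hFt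
  set T1 := (Ft.mapHomologicalComplex (ComplexShape.down ℕ)).obj S.complex with hT1
  have hiso := S.isoLeftDerivedObj Ft 1
  have hzero : IsZero (T1.homology 1) := htor.of_iso hiso.symm
  have hexactAt : T1.ExactAt 1 :=
    (T1.exactAt_iff_isZero_homology 1).mpr hzero
  have hexactsc : (T1.sc' 2 1 0).Exact :=
    (T1.exactAt_iff' 2 1 0 (by simp) (by simp)).mp hexactAt
  have hA1 : LinearMap.ker (T1.sc' 2 1 0).g.hom ≤ LinearMap.range (T1.sc' 2 1 0).f.hom :=
    (ShortComplex.moduleCat_exact_iff_ker_sub_range (T1.sc' 2 1 0)).mp hexactsc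
  have hA1' : LinearMap.ker
        (LinearMap.lTensor (↥A) ((S.complex.d 1 0).hom : S.complex.X 1 →ₗ[R] S.complex.X 0)) ≤
      LinearMap.range
        (LinearMap.lTensor (↥A) ((S.complex.d 2 1).hom : S.complex.X 2 →ₗ[R] S.complex.X 1)) := hA1
  -- Step 2: transfer to injectivity on the syzygy of M
  set σ0 : (S.complex.X 0 : Type u) →ₗ[R] M := (S.π.f 0 : S.complex.X 0 ⟶ ModuleCat.of R M).hom
    with hσ0def
  have hσ0 : Function.Surjective σ0 :=
    (ModuleCat.epi_iff_surjective (S.π.f 0)).mp inferInstance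
  have hS0 : LinearMap.range ((S.complex.d 1 0).hom : S.complex.X 1 →ₗ[R] S.complex.X 0)
      = LinearMap.ker σ0 := S.exact₀.moduleCat_range_eq_ker
  have hS1 : LinearMap.range ((S.complex.d 2 1).hom : S.complex.X 2 →ₗ[R] S.complex.X 1)
      = LinearMap.ker ((S.complex.d 1 0).hom : S.complex.X 1 →ₗ[R] S.complex.X 0) :=
    (S.exact_succ 0).moduleCat_range_eq_ker
  have hinjL : Function.Injective
      (LinearMap.lTensor (↥A) (LinearMap.ker σ0).subtype) :=
    Stmt0Aux.step_c2 (S.complex.d 1 0).hom (S.complex.d 2 1).hom σ0 hS0 hS1 hA1'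
  -- Step 3: balancing
  set π0 : (P.complex.X 0 : Type u) →ₗ[R] (↥A) := (P.π.f 0 : P.complex.X 0 ⟶ A).hom with hπ0def
  have hπ0 : Function.Surjective π0 :=
    (ModuleCat.epi_iff_surjective (P.π.f 0)).mp inferInstance
  have hP0 : LinearMap.range ((P.complex.d 1 0).hom : P.complex.X 1 →ₗ[R] P.complex.X 0)
      = LinearMap.ker π0 := P.exact₀.moduleCat_range_eq_ker
  have hP1 : LinearMap.range ((P.complex.d 2 1).hom : P.complex.X 2 →ₗ[R] P.complex.X 1)
      = LinearMap.ker ((P.complex.d 1 0).hom : P.complex.X 1 →ₗ[R] P.complex.X 0) :=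
    (P.exact_succ 0).moduleCat_range_eq_ker
  haveI : Module.Projective R (P.complex.X 0) := ModuleCat.projective_of_module_projective (P.complex.X 0)
  haveI : Module.Projective R (S.complex.X 0) := ModuleCat.projective_of_module_projective (S.complex.X 0)
  haveI : Module.Flat R (P.complex.X 0) := Module.Flat.of_projective
  haveI : Module.Flat R (S.complex.X 0) := Module.Flat.of_projective
  have hinjK : Function.Injective
      (LinearMap.rTensor M (LinearMap.ker π0).subtype) :=
    Stmt0Aux.balancing π0 hπ0 σ0 hσ0 hinjL
  have hex1 : LinearMap.ker
        (LinearMap.rTensor M ((P.complex.d 1 0).hom : P.complex.X 1 →ₗ[R] P.complex.X 0)) ≤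
      LinearMap.range
        (LinearMap.rTensor M ((P.complex.d 2 1).hom : P.complex.X 2 →ₗ[R] P.complex.X 1)) :=
    Stmt0Aux.step_c1 (P.complex.d 1 0).hom (P.complex.d 2 1).hom π0 hP0 hP1 hinjK
  -- Step 4: the surjection p : P₀ ⊗ M → M/IM
  set e : ((R ⧸ I) ⊗[R] M) ≃ₗ[R] (M ⧸ (I • (⊤ : Submodule R M))) :=
    TensorProduct.quotTensorEquivQuotSMul M I with he
  set pL : ((P.complex.X 0 : Type u) ⊗[R] M) →ₗ[R] (M ⧸ (I • (⊤ : Submodule R M))) :=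
    (e : ((R ⧸ I) ⊗[R] M) →ₗ[R] (M ⧸ (I • (⊤ : Submodule R M)))) ∘ₗ
      LinearMap.rTensor M π0 with hpL
  set p : ModuleCat.of R ((P.complex.X 0 : Type u) ⊗[R] M) ⟶ Xq := ModuleCat.ofHom pL with hp
  have hpsurj : Function.Surjective pL := by
    have h1 : Function.Surjective (LinearMap.rTensor M π0) :=
      LinearMap.rTensor_surjective M hπ0
    exact e.surjective.comp h1
  have hkerp : LinearMap.ker pL
      = LinearMap.range
        (LinearMap.rTensor M ((P.complex.d 1 0).hom : P.complex.X 1 →ₗ[R] P.complex.X 0)) := by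
    have h1 : LinearMap.ker pL = LinearMap.ker (LinearMap.rTensor M π0) := by
      ext v
      constructor
      · intro hv
        have hv' : e (LinearMap.rTensor M π0 v) = 0 := hv
        exact LinearMap.mem_ker.mpr ((LinearEquiv.map_eq_zero_iff e).mp hv')
      · intro hv
        have hv' : LinearMap.rTensor M π0 v = 0 := hv
        show e (LinearMap.rTensor M π0 v) = 0
        rw [hv', map_zero]
    rw [h1]
    have hexd : Function.Exact
        ((P.complex.d 1 0).hom : P.complex.X 1 →ₗ[R] P.complex.X 0) π0 :=
      LinearMap.exact_iff.mpr hP0.symm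
    have := rTensor_exact (M := (P.complex.X 1 : Type u)) M hexd hπ0
    rw [LinearMap.exact_iff] at this
    exact this
  -- Step 5: assemble
  obtain ⟨Edom, hEdom⟩ := Stmt0Aux.ext_dom (R := R) A Hc M P hex1 Xq p hkerp
  obtain ⟨Φ, hΦ⟩ := Stmt0Aux.ext_inject (R := R) Xq Hc (ModuleCat.of R ((P.complex.X 0 : Type u) ⊗[R] M))
    p hpsurj
  exact ⟨Φ ∘ₗ Edom, hΦ.comp hEdom.injective⟩

end
end

section
/- Let k be an infinite field, n ≥ 2 an integer, and R = k[x₁, …, xₙ] the polynomial ring. For each λ ∈ k* = k \ {0}, let T^λ = k[x₁]_{x₁−λ} be the localization of k[x₁] obtained by inverting the element x₁ − λ, regarded as an R-module via the k-algebra surjection R → k[x₁] sending x₁ ↦ x₁ and xᵢ ↦ 0 for 2 ≤ i ≤ n, and let R_{x₁} be the localization of R inverting x₁. Set N = (⊕_{λ ∈ k*} T^λ) ⊕ R_{x₁} and L = (⊕_{λ ∈ k*} k[x₁]) ⊕ R, viewed as an R-submodule of N via the canonical localization maps. Then for every λ ∈ k* the maximal ideal m_λ = (x₁ − λ, x₂,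 …, xₙ) belongs to Ass_R(N/L); in particular Ass_R(N/L) is infinite, and hence N is not a weakly Laskerian R-module. -/
set_option maxHeartbeats 1000000
set_option synthInstance.maxHeartbeats 400000

universe u

noncomputable section

open Polynomial
open scoped DirectSum

def projPoly (k : Type) [Field k] (n : ℕ) : MvPolynomial (Fin n) k →+* Polynomial k :=
  (MvPolynomial.aeval fun i : Fin n => if (i : ℕ) = 0 then (X : Polynomial k) else 0).toRingHom

abbrev Tloc (k : Type) [Field k] (lam : k) : Type :=
  Localization.Away (X - C lam : Polynomial k)

instance instModuleTloc (k : Type) [Field k] (n : ℕ) (lam : k) :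
    Module (MvPolynomial (Fin n) k) (Tloc k lam) :=
  Module.compHom _ ((algebraMap (Polynomial k) (Tloc k lam)).comp (projPoly k n))

abbrev bigN (k : Type) [Field k] (n : ℕ) [NeZero n] : Type :=
  (⨁ lam : {x : k // x ≠ 0}, Tloc k lam.val) ×
    Localization.Away (MvPolynomial.X (0 : Fin n) : MvPolynomial (Fin n) k)

def bigL (k : Type) [Field k] (n : ℕ) [NeZero n] : Submodule (MvPolynomial (Fin n) k) (bigN k n) :=
  letI := Classical.decEq {x : k // x ≠ 0}
  Submodule.span (MvPolynomial (Fin n) k)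
    ((Set.range fun lam : {x : k // x ≠ 0} =>
        ((DirectSum.of (fun l : {x : k // x ≠ 0} => Tloc k l.val) lam (1 : Tloc k lam.val), 0) :
          bigN k n)) ∪
      {((0, 1) : bigN k n)})

def mIdeal (k : Type) [Field k] (n : ℕ) [NeZero n] (lam : k) : Ideal (MvPolynomial (Fin n) k) :=
  Ideal.span ({MvPolynomial.X 0 - MvPolynomial.C lam} ∪
    Set.range fun i : {j : Fin n // j ≠ 0} => (MvPolynomial.X i.val : MvPolynomial (Fin n) k))

set_option linter.unusedSectionVars false

section Aux

variable (k : Type) [Field k] (n : ℕ) [NeZero n] (lam : k)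

theorem sub_C_eval_mem (r : MvPolynomial (Fin n) k) :
    r - MvPolynomial.C (MvPolynomial.eval (fun i : Fin n => if (i : ℕ) = 0 then lam else 0) r)
      ∈ mIdeal k n lam := by
  induction r using MvPolynomial.induction_on with
  | C a => simp
  | add p q hp hq =>
      have := Submodule.add_mem _ hp hq
      simpa [MvPolynomial.eval_add, map_add, sub_add_sub_comm] using this
  | mul_X p i hp =>
      by_cases h : i = (0 : Fin n)
      · subst h
        have h1 : (MvPolynomial.X 0 - MvPolynomial.C lam : MvPolynomial (Fin n) k)
            ∈ mIdeal k n lam := Ideal.subset_span (Or.inl rfl)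
        have key : p * MvPolynomial.X 0 -
            MvPolynomial.C (MvPolynomial.eval (fun i : Fin n => if (i : ℕ) = 0 then lam else 0)
              (p * MvPolynomial.X 0)) =
            p * (MvPolynomial.X 0 - MvPolynomial.C lam) +
            MvPolynomial.C lam *
              (p - MvPolynomial.C (MvPolynomial.eval
                (fun i : Fin n => if (i : ℕ) = 0 then lam else 0) p)) := by
          simp only [MvPolynomial.eval_mul, MvPolynomial.eval_X]
          simp only [if_pos (Fin.val_zero n), map_mul]
          ring
        rw [key]
        exact Submodule.add_mem _ (Ideal.mul_mem_left _ _ h1) (Ideal.mul_mem_left _ _ hp)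
      · have h1 : (MvPolynomial.X i : MvPolynomial (Fin n) k) ∈ mIdeal k n lam :=
          Ideal.subset_span (Or.inr ⟨⟨i, h⟩, rfl⟩)
        have : (i : ℕ) ≠ 0 := fun hc => h (Fin.ext (by simpa using hc))
        simp only [MvPolynomial.eval_mul, MvPolynomial.eval_X, if_neg this, mul_zero, map_zero,
          sub_zero]
        exact Ideal.mul_mem_left _ _ h1

theorem mIdeal_eq_ker :
    mIdeal k n lam =
      RingHom.ker (MvPolynomial.eval (fun i : Fin n => if (i : ℕ) = 0 then lam else 0)) := by
  apply le_antisymm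
  · rw [mIdeal, Ideal.span_le]
    rintro x (rfl | ⟨i, rfl⟩)
    · simp [RingHom.mem_ker]
    · have : (i.val : ℕ) ≠ 0 := fun hc => i.2 (Fin.ext (by simpa using hc))
      simp [RingHom.mem_ker, this, i.2]
  · intro r hr
    have := sub_C_eval_mem k n lam r
    rw [RingHom.mem_ker] at hr
    rwa [hr, map_zero, sub_zero] at this

theorem mIdeal_prime : (mIdeal k n lam).IsPrime := by
  rw [mIdeal_eq_ker]
  exact RingHom.ker_isPrime _

theorem eval_comp_projPoly :
    (Polynomial.evalRingHom lam).comp (projPoly k n) =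
      MvPolynomial.eval (fun i : Fin n => if (i : ℕ) = 0 then lam else 0) := by
  apply MvPolynomial.ringHom_ext
  · intro a; simp [projPoly]
  · intro i; by_cases h : i = 0 <;> simp [projPoly, h]

end Aux

section Main

variable (k : Type) [Field k] (n : ℕ) [NeZero n]

def uEl (lam : k) : Tloc k lam :=
  IsLocalization.mk' (Localization.Away (X - C lam : Polynomial k)) (1 : Polynomial k)
    ⟨X - C lam, Submonoid.mem_powers _⟩

theorem uEl_spec (lam : k) :
    uEl k lam * algebraMap (Polynomial k) (Tloc k lam) (X - C lam) = 1 := by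
  have := IsLocalization.mk'_spec (Localization.Away (X - C lam : Polynomial k))
    (1 : Polynomial k) (⟨X - C lam, Submonoid.mem_powers _⟩ :
      Submonoid.powers (X - C lam : Polynomial k))
  simpa [uEl] using this

def zEl (lam : k) (hl : lam ≠ 0) : bigN k n :=
  letI := Classical.decEq {x : k // x ≠ 0}
  (DirectSum.of (fun l : {x : k // x ≠ 0} => Tloc k l.val) ⟨lam, hl⟩ (uEl k lam), 0)

theorem tloc_smul_def (lam : k) (r : MvPolynomial (Fin n) k) (t : Tloc k lam) :
    r • t = algebraMap (Polynomial k) (Tloc k lam) (projPoly k n r) * t := rfl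

theorem smul_zEl (lam : k) (hl : lam ≠ 0) (r : MvPolynomial (Fin n) k) :
    letI := Classical.decEq {x : k // x ≠ 0}
    r • zEl k n lam hl =
      (DirectSum.of (fun l : {x : k // x ≠ 0} => Tloc k l.val) ⟨lam, hl⟩ (r • uEl k lam), 0) := by
  letI := Classical.decEq {x : k // x ≠ 0}
  have h1 : r • DirectSum.of (fun l : {x : k // x ≠ 0} => Tloc k l.val) ⟨lam, hl⟩ (uEl k lam) =
      DirectSum.of (fun l : {x : k // x ≠ 0} => Tloc k l.val) ⟨lam, hl⟩ (r • uEl k lam) := by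
    rw [← DirectSum.lof_eq_of (MvPolynomial (Fin n) k), ← map_smul,
      DirectSum.lof_eq_of]
  refine Prod.ext ?_ ?_
  · exact h1
  · show (r • zEl k n lam hl).2 = 0
    rw [Prod.smul_snd]
    show r • (zEl k n lam hl).2 = 0
    have h2 : (zEl k n lam hl).2 =
        (0 : Localization.Away (MvPolynomial.X (0 : Fin n) : MvPolynomial (Fin n) k)) := rfl
    rw [h2]
    exact smul_zero
      (A := Localization.Away (MvPolynomial.X (0 : Fin n) : MvPolynomial (Fin n) k)) r

/-- projection of `N` onto the `λ`-component of the direct sum. -/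
def piMap (lam : k) (hl : lam ≠ 0) : bigN k n →ₗ[MvPolynomial (Fin n) k] Tloc k lam :=
  (DirectSum.component (MvPolynomial (Fin n) k) {x : k // x ≠ 0}
      (fun l => Tloc k l.val) ⟨lam, hl⟩).comp
    (LinearMap.fst (MvPolynomial (Fin n) k) _ _)

theorem piMap_of_self (lam : k) (hl : lam ≠ 0) (t : Tloc k lam)
    (b : Localization.Away (MvPolynomial.X (0 : Fin n) : MvPolynomial (Fin n) k)) :
    letI := Classical.decEq {x : k // x ≠ 0}
    piMap k n lam hl ((DirectSum.of (fun l : {x : k // x ≠ 0} => Tloc k l.val) ⟨lam, hl⟩ t, b) :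
        bigN k n) = t := by
  letI := Classical.decEq {x : k // x ≠ 0}
  show DirectSum.component (MvPolynomial (Fin n) k) _ _ ⟨lam, hl⟩
      (DirectSum.of (fun l : {x : k // x ≠ 0} => Tloc k l.val) ⟨lam, hl⟩ t) = _
  rw [← DirectSum.lof_eq_of (MvPolynomial (Fin n) k), DirectSum.component.lof_self]

theorem piMap_of_ne (lam : k) (hl : lam ≠ 0) (mu : {x : k // x ≠ 0}) (hmu : mu ≠ ⟨lam, hl⟩)
    (t : Tloc k mu.val)
    (b : Localization.Away (MvPolynomial.X (0 : Fin n) : MvPolynomial (Fin n) k)) :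
    letI := Classical.decEq {x : k // x ≠ 0}
    piMap k n lam hl ((DirectSum.of (fun l : {x : k // x ≠ 0} => Tloc k l.val) mu t, b) :
        bigN k n) = 0 := by
  letI := Classical.decEq {x : k // x ≠ 0}
  show DirectSum.component (MvPolynomial (Fin n) k) _ _ ⟨lam, hl⟩
      (DirectSum.of (fun l : {x : k // x ≠ 0} => Tloc k l.val) mu t) = _
  rw [← DirectSum.lof_eq_of (MvPolynomial (Fin n) k), DirectSum.component.of, dif_neg hmu]

theorem piMap_zero_one (lam : k) (hl : lam ≠ 0) :
    piMap k n lam hl (((0, 1)) : bigN k n) = 0 := by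
  show DirectSum.component (MvPolynomial (Fin n) k) {x : k // x ≠ 0}
      (fun l => Tloc k l.val) ⟨lam, hl⟩
      (0 : ⨁ l : {x : k // x ≠ 0}, Tloc k l.val) = 0
  exact map_zero _

theorem key_mem_iff (lam : k) (hl : lam ≠ 0) (r : MvPolynomial (Fin n) k) :
    r • zEl k n lam hl ∈ bigL k n ↔ r ∈ mIdeal k n lam := by
  letI := Classical.decEq {x : k // x ≠ 0}
  constructor
  · -- hard direction
    intro hr
    have hL : bigL k n ≤ Submodule.comap (piMap k n lam hl)
        (Submodule.span (MvPolynomial (Fin n) k) {(1 : Tloc k lam)}) := by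
      rw [bigL, Submodule.span_le]
      rintro x hx
      rcases hx with ⟨mu, rfl⟩ | rfl
      · rw [SetLike.mem_coe, Submodule.mem_comap]
        rcases eq_or_ne mu ⟨lam, hl⟩ with rfl | h
        · rw [piMap_of_self]
          exact Submodule.mem_span_singleton_self _
        · rw [piMap_of_ne k n lam hl mu h]
          exact Submodule.zero_mem _
      · rw [SetLike.mem_coe, Submodule.mem_comap, piMap_zero_one]
        exact Submodule.zero_mem _
    have h2 := hL hr
    rw [Submodule.mem_comap, smul_zEl, piMap_of_self] at h2
    rw [Submodule.mem_span_singleton] at h2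
    obtain ⟨s, hs⟩ := h2
    rw [tloc_smul_def, tloc_smul_def, mul_one] at hs
    have hinj : Function.Injective (algebraMap (Polynomial k) (Tloc k lam)) :=
      IsLocalization.injective _
        (powers_le_nonZeroDivisors_of_noZeroDivisors (X_sub_C_ne_zero lam))
    have hps : projPoly k n r = projPoly k n s * (X - C lam) := by
      apply hinj
      have h4 := congrArg (· * algebraMap (Polynomial k) (Tloc k lam) (X - C lam)) hs
      rw [mul_assoc, uEl_spec, mul_one] at h4
      rw [map_mul, ← h4]
    have heval : MvPolynomial.eval (fun i : Fin n => if (i : ℕ) = 0 then lam else 0) r = 0 := by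
      have h5 := congrArg (Polynomial.evalRingHom lam) hps
      simp only [map_mul, map_sub, coe_evalRingHom, eval_X, eval_C, sub_self, mul_zero] at h5
      rw [← eval_comp_projPoly k n lam]
      simpa using h5
    rw [mIdeal_eq_ker, RingHom.mem_ker]
    exact heval
  · -- easy direction
    intro hr
    have hJ : mIdeal k n lam ≤ Submodule.comap
        (LinearMap.toSpanSingleton (MvPolynomial (Fin n) k) (bigN k n) (zEl k n lam hl))
        (bigL k n) := by
      rw [mIdeal, Ideal.span_le]
      rintro x hx
      rcases hx with rfl | ⟨i, rfl⟩
      · rw [SetLike.mem_coe, Submodule.mem_comap, LinearMap.toSpanSingleton_apply, smul_zEl]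
        have hu1 : (MvPolynomial.X 0 - MvPolynomial.C lam : MvPolynomial (Fin n) k) • uEl k lam
            = 1 := by
          rw [tloc_smul_def]
          have hp : projPoly k n (MvPolynomial.X 0 - MvPolynomial.C lam) = X - C lam := by
            simp [projPoly]
          rw [hp, mul_comm]
          exact uEl_spec k lam
        rw [hu1]
        exact Submodule.subset_span (Or.inl ⟨⟨lam, hl⟩, rfl⟩)
      · rw [SetLike.mem_coe, Submodule.mem_comap, LinearMap.toSpanSingleton_apply, smul_zEl]
        have hu0 : (MvPolynomial.X i.val : MvPolynomial (Fin n) k) • uEl k lam = 0 := by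
          rw [tloc_smul_def]
          have hi : (i.val : ℕ) ≠ 0 := fun hc => i.2 (Fin.ext (by simpa using hc))
          have hp : projPoly k n (MvPolynomial.X i.val) = 0 := by
            simp [projPoly, hi, i.2]
          rw [hp, map_zero, zero_mul]
        rw [hu0, map_zero]
        exact Submodule.zero_mem _
    exact hJ hr

theorem mIdeal_isAssociated (lam : k) (hl : lam ≠ 0) :
    mIdeal k n lam ∈
      associatedPrimes (MvPolynomial (Fin n) k) (bigN k n ⧸ bigL k n) := by
  show IsAssociatedPrime _ _
  rw [isAssociatedPrime_iff]
  refine ⟨mIdeal_prime k n lam, Submodule.Quotient.mk (zEl k n lam hl), ?_⟩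
  ext r
  rw [Submodule.mem_colon_singleton, Submodule.mem_bot, ← Submodule.Quotient.mk_smul,
    Submodule.Quotient.mk_eq_zero, key_mem_iff]

end Main

/-- Let `k` be an infinite field, `n ≥ 2`, `R = k[x₁, …, xₙ]`,
`N = (⊕_{λ ∈ k*} k[x₁]_{x₁−λ}) ⊕ R_{x₁}` and `L = (⊕_{λ ∈ k*} k[x₁]) ⊕ R ⊆ N`. Then for
every `λ ∈ k*` the maximal ideal `m_λ = (x₁ − λ, x₂, …, xₙ)` is an associated prime of
`N/L`; in particular `Ass_R(N/L)` is infinite and `N` is not weakly Laskerian. -/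
theorem mIdeal_mem_associatedPrimes_and_not_isWeaklyLaskerian
    (k : Type) [Field k] [Infinite k] (n : ℕ) [NeZero n] (hn : 2 ≤ n) :
    (∀ lam : k, lam ≠ 0 →
      mIdeal k n lam ∈
        associatedPrimes (MvPolynomial (Fin n) k) (bigN k n ⧸ bigL k n)) ∧
    (associatedPrimes (MvPolynomial (Fin n) k) (bigN k n ⧸ bigL k n)).Infinite ∧
    ¬ IsWeaklyLaskerian (MvPolynomial (Fin n) k) (bigN k n) := by
  have hmem : ∀ lam : k, lam ≠ 0 →
      mIdeal k n lam ∈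
        associatedPrimes (MvPolynomial (Fin n) k) (bigN k n ⧸ bigL k n) :=
    fun lam hl => mIdeal_isAssociated k n lam hl
  have hinf : (associatedPrimes (MvPolynomial (Fin n) k) (bigN k n ⧸ bigL k n)).Infinite := by
    haveI : Infinite {x : k // x ≠ 0} := by
      have h0 : Set.Infinite {x : k | x ≠ 0} := (Set.finite_singleton (0 : k)).infinite_compl
      exact h0.to_subtype
    refine Set.infinite_of_injective_forall_mem
      (f := fun lam : {x : k // x ≠ 0} => mIdeal k n lam.val) ?_ ?_
    · intro a b hab
      have hab' : mIdeal k n a.val = mIdeal k n b.val := hab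
      have ha : (MvPolynomial.X 0 - MvPolynomial.C a.val : MvPolynomial (Fin n) k)
          ∈ mIdeal k n b.val := by
        rw [← hab']; exact Ideal.subset_span (Or.inl rfl)
      rw [mIdeal_eq_ker, RingHom.mem_ker] at ha
      simp only [map_sub, MvPolynomial.eval_X, MvPolynomial.eval_C, Fin.val_zero, if_pos rfl,
        sub_eq_zero] at ha
      exact Subtype.ext ha.symm
    · intro lam
      exact hmem lam.val lam.2
  refine ⟨hmem, hinf, ?_⟩
  intro h
  exact hinf (h (bigL k n))

end
end
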